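/- Let (G, Σ, χ, w) be a Decoder Retrieval instance and let a ∈ Σ. If the color class V_a is neither a clique nor an independent set in G, then the instance has no solution, i.e., no decoder D ⊆ Σ×Σ is a solution. -/

import Mathlib

/-- The letter graph `G(D, w)` on vertex set `Fin w.length`: positions `i < j`
are adjacent iff the ordered pair of letters `(w_i, w_j)` lies in the decoder `D`. -/
def letterGraph {A : Type*} (D : Set (A × A)) (w : List A) : SimpleGraph (Fin w.length) where
  Adj i j := (i < j ∧ (w.get i, w.get j) ∈ D) ∨ (j < i ∧ (w.get j, w.get i) ∈ D)
  symm := by constructor; intro i j h; exact h.symm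
  loopless := by constructor; intro i h; rcases h with ⟨h, -⟩ | ⟨h, -⟩ <;> exact lt_irrefl _ h

/-- `D` is a solution for the decoder-retrieval data `(G, χ, w)`: there is a graph
isomorphism from `G` to the letter graph `G(D, w)` that respects the coloring `χ`. -/
def IsSolution {V A : Type*} (G : SimpleGraph V) (χ : V → A) (w : List A)
    (D : Set (A × A)) : Prop :=
  ∃ f : G ≃g letterGraph D w, ∀ v : V, χ v = w.get (f v)

/-- If a color class `V_a` is neither a clique nor an independent set in `G`,
then the Decoder Retrieval instance has no solution. -/
theorem no_solution_of_not_clique_not_independent {V A : Type*} [Fintype V] [Fintype A] [DecidableEq A]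
    (G : SimpleGraph V) (χ : V → A) (w : List A)
    (hcls : ∀ b : A, ∃ v : V, χ v = b)
    (hlen : w.length = Fintype.card V)
    (hcount : ∀ b : A, w.count b = (Finset.univ.filter fun v => χ v = b).card)
    (a : A)
    (hnc : ¬ ∀ u v : V, χ u = a → χ v = a → u ≠ v → G.Adj u v)
    (hni : ¬ ∀ u v : V, χ u = a → χ v = a → u ≠ v → ¬ G.Adj u v) :
    ∀ D : Set (A × A), ¬ IsSolution G χ w D := by
  intro D ⟨f, hf⟩
  push_neg at hnc hni
  obtain ⟨u, v, hu, hv, huv, hadj⟩ := hnc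
  obtain ⟨p, q, hp, hq, hpq, hpadj⟩ := hni
  by_cases h : (a, a) ∈ D
  · -- then u v should be adjacent
    apply hadj
    rw [f.map_adj_iff.symm] at *
    have hne : f u ≠ f v := fun e => huv (f.injective e)
    have hu' : w.get (f u) = a := (hf u).symm.trans hu
    have hv' : w.get (f v) = a := (hf v).symm.trans hv
    rcases lt_or_gt_of_ne hne with hlt | hlt
    · exact Or.inl ⟨hlt, by rw [hu', hv']; exact h⟩
    · exact Or.inr ⟨hlt, by rw [hu', hv']; exact h⟩
  · -- then p q should be non-adjacent
    apply h
    have := f.map_adj_iff.mpr hpadj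
    have hp' : w.get (f p) = a := (hf p).symm.trans hp
    have hq' : w.get (f q) = a := (hf q).symm.trans hq
    rcases this with ⟨-, hm⟩ | ⟨-, hm⟩
    · rwa [hp', hq'] at hm
    · rwa [hq', hp'] at hm
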